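/- A well-aligned data subcomplex containing a nontrivial data table is the image of a unique data section: well-alignedness (any two tables agreeing via attribute inclusions from a common sublist have equal reductions to that sublist, realized by a table in the subcomplex) is equivalent to the existence of a section σ of the projection p with σ(p(𝒳')) = 𝒳'; in particular all tables share the same nonzero total mass and each attribute list carries exactly one measure. -/

import Mathlib

open MeasureTheory
open scoped ENNReal

variable (A : Type*) (Val : A → Type*) [∀ a, MeasurableSpace (Val a)]

/-- A data table: a finite attribute list `T : Fin n → A` together with a measure on the
product of the corresponding value spaces.  (The level `n` is the length of the list;
`n = 0` is the empty list, whose value space is a singleton.) -/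
def DT : Type _ := Σ n : ℕ, Σ T : Fin n → A, Measure (∀ k, Val (T k))

/-- Face map `d_i`: delete the `i`-th attribute and marginalize the measure. -/
noncomputable def face {n : ℕ} (T : Fin (n+1) → A) (i : Fin (n+1))
    (τ : Measure (∀ k, Val (T k))) : Measure (∀ k : Fin n, Val (T (i.succAbove k))) :=
  τ.map fun x k => x (i.succAbove k)

/-- Degeneracy map `s_i`: repeat the `i`-th attribute and push the measure forward along
the diagonal duplication (Dirac diagonal). -/
noncomputable def degen {n : ℕ} (T : Fin n → A) (i : Fin n)
    (τ : Measure (∀ k, Val (T k))) : Measure (∀ k : Fin (n+1), Val (T (i.predAbove k))) :=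
  τ.map fun x k => x (i.predAbove k)

/-- Reduction (marginalization) along an attribute inclusion `ι`. -/
noncomputable def red {m n : ℕ} (T : Fin n → A) (ι : Fin m → Fin n)
    (τ : Measure (∀ k, Val (T k))) : Measure (∀ k : Fin m, Val (T (ι k))) :=
  τ.map fun x k => x (ι k)

/-- A data subcomplex: a collection of data tables closed under the face
(marginalization) and degeneracy (diagonal) maps. -/
def IsSubcomplex (S : Set (DT A Val)) : Prop :=
  (∀ (n : ℕ) (T : Fin (n+1) → A) (τ : Measure (∀ k, Val (T k))) (i : Fin (n+1)),
      ⟨n+1, T, τ⟩ ∈ S → ⟨n, T ∘ i.succAbove, face A Val T i τ⟩ ∈ S) ∧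
  (∀ (n : ℕ) (T : Fin n → A) (τ : Measure (∀ k, Val (T k))) (i : Fin n),
      ⟨n, T, τ⟩ ∈ S → ⟨n+1, T ∘ i.predAbove, degen A Val T i τ⟩ ∈ S)

/-- The combinatorial data of a merge of two attribute inclusions
`ι01 : T₀ ↪ T₀₁`, `ι02 : T₀ ↪ T₀₂` into a common list of length `n012`: order-preserving
inclusions of the two lists whose images cover the merged index set, agree on the common
sublist, and overlap exactly in it. -/
structure MergeTop (n0 n01 n02 n012 : ℕ)
    (ι01 : Fin n0 → Fin n01) (ι02 : Fin n0 → Fin n02) : Type where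
  μ01 : Fin n01 → Fin n012
  μ02 : Fin n02 → Fin n012
  mono01 : StrictMono μ01
  mono02 : StrictMono μ02
  comm : μ01 ∘ ι01 = μ02 ∘ ι02
  cover : Set.range μ01 ∪ Set.range μ02 = Set.univ
  inter : Set.range μ01 ∩ Set.range μ02 = Set.range (μ01 ∘ ι01)

/-- The strong join condition: for every pair of member tables that are well-aligned along
a common sublist (their reductions to it agree), *every* join of them — every measure on a
merged list reducing to the two given measures — is again a member. -/
def StrongJoinCondition (S : Set (DT A Val)) : Prop :=
  ∀ {n0 n01 n02 n012 : ℕ} (ι01 : Fin n0 → Fin n01) (ι02 : Fin n0 → Fin n02),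
    StrictMono ι01 → StrictMono ι02 →
    ∀ (M : MergeTop n0 n01 n02 n012 ι01 ι02) (T012 : Fin n012 → A)
      (τ01 : Measure (∀ k : Fin n01, Val (T012 (M.μ01 k))))
      (τ02 : Measure (∀ k : Fin n02, Val (T012 (M.μ02 k)))),
      ⟨n01, T012 ∘ M.μ01, τ01⟩ ∈ S → ⟨n02, T012 ∘ M.μ02, τ02⟩ ∈ S →
      HEq (red A Val (T012 ∘ M.μ01) ι01 τ01) (red A Val (T012 ∘ M.μ02) ι02 τ02) →
      ∀ τ012 : Measure (∀ k, Val (T012 k)),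
        red A Val T012 M.μ01 τ012 = τ01 → red A Val T012 M.μ02 τ012 = τ02 →
        ⟨n012, T012, τ012⟩ ∈ S

/-- Well-alignedness: any two member tables with attribute inclusions from a common
sublist have equal reductions to that sublist, realized by a member table over it. -/
def WellAligned (S : Set (DT A Val)) : Prop :=
  ∀ {n0 n01 n02 : ℕ} (T01 : Fin n01 → A) (T02 : Fin n02 → A)
    (τ01 : Measure (∀ k, Val (T01 k))) (τ02 : Measure (∀ k, Val (T02 k)))
    (ι01 : Fin n0 → Fin n01) (ι02 : Fin n0 → Fin n02),
    StrictMono ι01 → StrictMono ι02 → T01 ∘ ι01 = T02 ∘ ι02 →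
    ⟨n01, T01, τ01⟩ ∈ S → ⟨n02, T02, τ02⟩ ∈ S →
    ∃ τ0 : Measure (∀ k : Fin n0, Val (T01 (ι01 k))),
      ⟨n0, T01 ∘ ι01, τ0⟩ ∈ S ∧
      red A Val T01 ι01 τ01 = τ0 ∧ HEq (red A Val T02 ι02 τ02) τ0


section Aux

lemma red_id {n : ℕ} (T : Fin n → A) (τ : Measure (∀ k, Val (T k))) :
    red A Val T id τ = τ := Measure.map_id

lemma fin_strictMono_eq_id {n : ℕ} {f : Fin n → Fin n} (hf : StrictMono f) : f = id := by
  refine (StrictMono.range_inj hf strictMono_id).mp ?_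
  rw [Set.range_id, Set.range_eq_univ]
  exact Finite.surjective_of_injective hf.injective

lemma red_mem {S : Set (DT A Val)} (hsub : IsSubcomplex A Val S) :
    ∀ (n m : ℕ) (ι : Fin m → Fin n), StrictMono ι →
      ∀ (T : Fin n → A) (τ : Measure (∀ k, Val (T k))),
        ⟨n, T, τ⟩ ∈ S → ⟨m, T ∘ ι, red A Val T ι τ⟩ ∈ S := by
  intro n
  induction n with
  | zero =>
    intro m ι hι T τ hmem
    have hm : m = 0 := by
      cases m with
      | zero => rfl
      | succ m => exact (ι 0).elim0
    subst hm
    have hι0 : ι = id := funext fun k => k.elim0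
    subst hι0
    show (⟨0, T, red A Val T id τ⟩ : DT A Val) ∈ S
    rw [red_id]
    exact hmem
  | succ n ih =>
    intro m ι hι T τ hmem
    have hle : m ≤ n + 1 := by
      have := Fintype.card_le_of_injective ι hι.injective
      simpa using this
    rcases eq_or_lt_of_le hle with heq | hlt
    · subst heq
      have hι0 : ι = id := fin_strictMono_eq_id hι
      subst hι0
      show (⟨n + 1, T, red A Val T id τ⟩ : DT A Val) ∈ S
      rw [red_id]
      exact hmem
    · have hnsurj : ¬ Function.Surjective ι := by
        intro hs
        have := Fintype.card_le_of_surjective ι hs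
        simp at this
        omega
      simp only [Function.Surjective, not_forall] at hnsurj
      obtain ⟨i, hi⟩ := hnsurj
      have hne' : ∀ k, ι k ≠ i := fun k he => hi ⟨k, he⟩
      choose ι' hι' using fun k => Fin.exists_succAbove_eq (hne' k)
      have hfac : ι = i.succAbove ∘ ι' := funext fun k => (hι' k).symm
      have hι'm : StrictMono ι' := by
        intro a b hab
        have h2 : ι a < ι b := hι hab
        rw [← hι' a, ← hι' b] at h2
        exact (Fin.succAbove_lt_succAbove_iff).mp h2
      subst hfac
      have h1 : (⟨n, T ∘ i.succAbove, face A Val T i τ⟩ : DT A Val) ∈ S :=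
        hsub.1 n T τ i hmem
      have h2 := ih m ι' hι'm (T ∘ i.succAbove) (face A Val T i τ) h1
      have hmeq : red A Val (T ∘ i.succAbove) ι' (face A Val T i τ)
          = red A Val T (i.succAbove ∘ ι') τ := by
        unfold red face
        exact Measure.map_map (measurable_pi_lambda _ fun j => measurable_pi_apply _)
            (measurable_pi_lambda _ fun j => measurable_pi_apply _)
      rw [hmeq] at h2
      exact h2

lemma uniq_of_wa {S : Set (DT A Val)} (hwa : WellAligned A Val S) :
    ∀ (n : ℕ) (T : Fin n → A) (τ τ' : Measure (∀ k, Val (T k))),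
      ⟨n, T, τ⟩ ∈ S → ⟨n, T, τ'⟩ ∈ S → τ = τ' := by
  intro n T τ τ' h h'
  obtain ⟨τ0, -, h1, h2⟩ := hwa T T τ τ' id id strictMono_id strictMono_id rfl h h'
  have h2' : red A Val T id τ' = τ0 := eq_of_heq h2
  rw [red_id] at h1 h2'
  exact h1.trans h2'.symm

lemma mass_heq {n : ℕ} {T T' : Fin n → A} (h : T = T')
    {μ : Measure (∀ k, Val (T k))} {ν : Measure (∀ k, Val (T' k))} (hh : HEq μ ν) :
    μ Set.univ = ν Set.univ := by subst h; rw [eq_of_heq hh]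

lemma red_mass {m n : ℕ} (T : Fin n → A) (ι : Fin m → Fin n)
    (τ : Measure (∀ k, Val (T k))) :
    red A Val T ι τ Set.univ = τ Set.univ := by
  unfold red
  rw [Measure.map_apply (measurable_pi_lambda _ fun j => measurable_pi_apply _)
    MeasurableSet.univ, Set.preimage_univ]

end Aux

/- STATEMENT 13: a well-aligned data subcomplex containing a nontrivial data table is the
image of a unique data section: well-alignedness is equivalent to the existence of a
section σ of the projection p (assigning to each attribute list a measure) whose graph is
exactly the subcomplex (σ(p(𝒳')) = 𝒳'); in particular each attribute list in the base
carries exactly one measure of the subcomplex, and all member tables share the same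
nonzero total mass. -/

theorem well_aligned_iff_section
    [Fintype A] [∀ a, MetricSpace (Val a)] [∀ a, CompactSpace (Val a)]
    [∀ a, BorelSpace (Val a)]
    (S : Set (DT A Val)) (hsub : IsSubcomplex A Val S)
    (hfin : ∀ x ∈ S, IsFiniteMeasure x.2.2)
    (hne : ∃ x ∈ S, x.2.2 ≠ 0) :
    (WellAligned A Val S ↔
      ∃ σ : ∀ (n : ℕ) (T : Fin n → A), Measure (∀ k, Val (T k)),
        (∀ x ∈ S, x.2.2 = σ x.1 x.2.1) ∧
        (∀ (n : ℕ) (T : Fin n → A) (τ : Measure (∀ k, Val (T k))),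
          ⟨n, T, τ⟩ ∈ S → ⟨n, T, σ n T⟩ ∈ S)) ∧
    (WellAligned A Val S →
      ((∀ (n : ℕ) (T : Fin n → A) (τ τ' : Measure (∀ k, Val (T k))),
          ⟨n, T, τ⟩ ∈ S → ⟨n, T, τ'⟩ ∈ S → τ = τ') ∧
        ∃ M : ℝ≥0∞, M ≠ 0 ∧ ∀ x ∈ S, x.2.2 Set.univ = M)) := by
    classical
  constructor
  · constructor
    · intro hwa
      refine ⟨fun n T => if h : ∃ τ, (⟨n, T, τ⟩ : DT A Val) ∈ S then h.choose else 0,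
        ?_, ?_⟩
      · intro x hx
        obtain ⟨n, T, τ⟩ := x
        have hex : ∃ τ', (⟨n, T, τ'⟩ : DT A Val) ∈ S := ⟨τ, hx⟩
        show τ = _
        simp only [dif_pos hex]
        exact uniq_of_wa A Val hwa n T τ hex.choose hx hex.choose_spec
      · intro n T τ hmem
        have hex : ∃ τ', (⟨n, T, τ'⟩ : DT A Val) ∈ S := ⟨τ, hmem⟩
        simp only [dif_pos hex]
        exact hex.choose_spec
    · rintro ⟨σ, hσ1, hσ2⟩
      intro n0 n01 n02 T01 T02 τ01 τ02 ι01 ι02 hm1 hm2 hT hmem1 hmem2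
      have hB := red_mem A Val hsub n01 n0 ι01 hm1 T01 τ01 hmem1
      have hA := red_mem A Val hsub n02 n0 ι02 hm2 T02 τ02 hmem2
      refine ⟨red A Val T01 ι01 τ01, hB, rfl, ?_⟩
      have e1 : red A Val T02 ι02 τ02 = σ n0 (T02 ∘ ι02) := hσ1 _ hA
      have e2 : red A Val T01 ι01 τ01 = σ n0 (T01 ∘ ι01) := hσ1 _ hB
      have e3 : HEq (σ n0 (T02 ∘ ι02)) (σ n0 (T01 ∘ ι01)) := by
        have key : ∀ (F G : Fin n0 → A), F = G → HEq (σ n0 F) (σ n0 G) := by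
          intro F G h; subst h; rfl
        exact key _ _ hT.symm
      rw [e1, e2]
      exact e3
  · intro hwa
    refine ⟨uniq_of_wa A Val hwa, ?_⟩
    obtain ⟨x0, hx0, hx0ne⟩ := hne
    refine ⟨x0.2.2 Set.univ, fun h => hx0ne (Measure.measure_univ_eq_zero.mp h), ?_⟩
    intro x hx
    obtain ⟨n0, T0, τ0⟩ := x0
    obtain ⟨n, T, τ⟩ := x
    have hTeq : T ∘ (Fin.elim0 : Fin 0 → Fin n) = T0 ∘ (Fin.elim0 : Fin 0 → Fin n0) :=
      funext fun k => k.elim0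
    obtain ⟨ν, -, h1, h2⟩ := hwa T T0 τ τ0 Fin.elim0 Fin.elim0
      (fun a => a.elim0) (fun a => a.elim0) hTeq hx hx0
    have e1 : τ Set.univ = ν Set.univ := by
      rw [← h1, red_mass]
    have e2 : τ0 Set.univ = ν Set.univ := by
      rw [← red_mass A Val T0 Fin.elim0 τ0]
      exact mass_heq A Val (funext fun k => k.elim0) h2
    show τ Set.univ = τ0 Set.univ
    rw [e1, e2]
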